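/- Let N be a natural number, let α be a real number, and let d, c : ℕ → ℝ be arbitrary sequences. If ∑_{j=0}^{N} d(j) ≥ α · ∑_{j=0}^{N} c(j), then there exists a level i with 0 ≤ i ≤ N such that for every j with 0 ≤ j ≤ i one has ∑_{q=j}^{i} d(q) ≥ α · ∑_{q=j}^{i} c(q). -/

import Mathlib

lemma exists_critical_aux (g : ℕ → ℝ) :
    ∀ N : ℕ, (0 ≤ ∑ q ∈ Finset.range (N + 1), g q) →
      ∃ i ≤ N, ∀ j ≤ i, 0 ≤ ∑ q ∈ Finset.Icc j i, g q := by
  intro N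
  induction N using Nat.strong_induction_on with
  | _ N ih =>
    intro h
    by_cases hall : ∀ j ≤ N, 0 ≤ ∑ q ∈ Finset.Icc j N, g q
    · exact ⟨N, le_refl N, hall⟩
    · push_neg at hall
      obtain ⟨j, hjN, hneg⟩ := hall
      have hj0 : j ≠ 0 := by
        rintro rfl
        rw [show Finset.Icc 0 N = Finset.range (N + 1) by
          ext x; simp [Nat.lt_succ_iff]] at hneg
        linarith
      obtain ⟨m, rfl⟩ := Nat.exists_eq_succ_of_ne_zero hj0
      have hsplit : ∑ q ∈ Finset.range (N + 1), g q =
          ∑ q ∈ Finset.range (m + 1), g q + ∑ q ∈ Finset.Icc (m + 1) N, g q := by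
        rw [show Finset.Icc (m + 1) N = Finset.Ico (m + 1) (N + 1) by
          ext x; simp [Nat.lt_succ_iff]]
        rw [Finset.range_eq_Ico, Finset.range_eq_Ico]
        exact (Finset.sum_Ico_consecutive _ (Nat.zero_le _) (Nat.le_succ_of_le hjN)).symm
      have hpre : 0 ≤ ∑ q ∈ Finset.range (m + 1), g q := by linarith
      obtain ⟨i, him, hi⟩ := ih m (Nat.lt_of_succ_le hjN) hpre
      exact ⟨i, le_trans him (le_trans (Nat.le_succ m) hjN), hi⟩

theorem exists_critical_level (N : ℕ) (α : ℝ) (d c : ℕ → ℝ)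
    (h : ∑ j ∈ Finset.range (N + 1), d j ≥ α * ∑ j ∈ Finset.range (N + 1), c j) :
    ∃ i ≤ N, ∀ j ≤ i,
      ∑ q ∈ Finset.Icc j i, d q ≥ α * ∑ q ∈ Finset.Icc j i, c q := by
  have key := exists_critical_aux (fun q => d q - α * c q) N (by
    rw [Finset.sum_sub_distrib, ← Finset.mul_sum]; linarith)
  obtain ⟨i, hiN, hi⟩ := key
  refine ⟨i, hiN, fun j hj => ?_⟩
  have := hi j hj
  rw [Finset.sum_sub_distrib, ← Finset.mul_sum] at this
  linarith
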